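/- For σ∈(0,1) and τ=√(1-σ²), the quantity (1/τ³)(1 - (2/π)(τ + (1/σ)arctan(σ/τ))) is at most 1 - 4/π, and 1 - 4/π ≤ -0.27. -/

import Mathlib

open Real

noncomputable def Gfun : ℝ → ℝ :=
  fun t => 2 * t - Real.sin t * (π - 2 * Real.cos t + (4 - π) * (Real.cos t) ^ 3)

set_option maxHeartbeats 1000000 in
lemma Gfun_hasDerivAt (t : ℝ) :
    HasDerivAt Gfun
      (Real.cos t * (1 - Real.cos t) *
        ((16 - 4 * π) * (Real.cos t) ^ 2 + (16 - 4 * π) * Real.cos t - π)) t := by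
  have hcos := Real.hasDerivAt_cos t
  have hsin := Real.hasDerivAt_sin t
  have hpow : HasDerivAt (fun u => (Real.cos u) ^ 3)
      (3 * (Real.cos t) ^ 2 * (-Real.sin t)) t := by
    simpa using hcos.fun_pow 3
  have hF := ((hasDerivAt_const t π).sub (hcos.const_mul 2)).add (hpow.const_mul (4 - π))
  have h2 : HasDerivAt (fun u => (2:ℝ) * u) 2 t := by
    simpa using (hasDerivAt_id t).const_mul (2:ℝ)
  have := h2.sub (hsin.mul hF)
  refine this.congr_deriv ?_
  simp only [Pi.add_apply, Pi.sub_apply]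
  have hsc := Real.sin_sq_add_cos_sq t
  linear_combination (-(2 - 3 * (4 - π) * Real.cos t ^ 2)) * hsc

set_option maxHeartbeats 1000000 in
lemma Gfun_nonneg : ∀ t ∈ Set.Icc 0 (π / 2), 0 ≤ Gfun t := by
  have hπ4 : π < 3.15 := Real.pi_lt_d2
  have hπ3 : 3 < π := Real.pi_gt_three
  have ha : 0 < 16 - 4 * π := by linarith
  set a : ℝ := 16 - 4 * π with ha_def
  set D : ℝ := a ^ 2 + 4 * a * π with hD_def
  have hD : 0 < D := by positivity
  have hsq : Real.sqrt D ^ 2 = D := Real.sq_sqrt hD.le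
  have hsqrt_pos : 0 < Real.sqrt D := Real.sqrt_pos.mpr hD
  set c : ℝ := (Real.sqrt D - a) / (2 * a) with hc_def
  have hc_pos : 0 < c := by
    apply div_pos _ (by linarith)
    have : a < Real.sqrt D := by
      nlinarith [hsq, hsqrt_pos]
    linarith
  have hc_lt1 : c < 1 := by
    rw [hc_def, div_lt_one (by linarith)]
    have : Real.sqrt D < 3 * a := by
      nlinarith [hsq, hsqrt_pos]
    linarith
  have hroot : a * c ^ 2 + a * c - π = 0 := by
    rw [hc_def]
    field_simp
    nlinarith [hsq]
  set t₀ : ℝ := Real.arccos c with ht₀_def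
  have ht₀_mem : t₀ ∈ Set.Icc (0:ℝ) (π / 2) :=
    ⟨Real.arccos_nonneg c, Real.arccos_le_pi_div_two.mpr hc_pos.le⟩
  have hcos_t₀ : Real.cos t₀ = c := Real.cos_arccos (by linarith) hc_lt1.le
  have hcont : ∀ s : Set ℝ, ContinuousOn Gfun s := by
    intro s
    apply Continuous.continuousOn
    unfold Gfun
    continuity
  have hdiff : ∀ s : Set ℝ, DifferentiableOn ℝ Gfun s :=
    fun s x _ => (Gfun_hasDerivAt x).differentiableAt.differentiableWithinAt
  -- monotone on [0, t₀]
  have hmono : MonotoneOn Gfun (Set.Icc 0 t₀) := by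
    apply monotoneOn_of_deriv_nonneg (convex_Icc _ _) (hcont _) (hdiff _)
    intro x hx
    rw [interior_Icc] at hx
    rw [(Gfun_hasDerivAt x).deriv]
    have hx1 : 0 < x := hx.1
    have hx2 : x < t₀ := hx.2
    have hcx_pos : 0 < Real.cos x := by
      apply Real.cos_pos_of_mem_Ioo
      constructor <;> [linarith [Real.pi_pos]; exact lt_of_lt_of_le hx2 ht₀_mem.2]
    have hcx_le1 : Real.cos x ≤ 1 := Real.cos_le_one x
    have hcx_ge : c < Real.cos x := by
      rw [← hcos_t₀]
      apply Real.strictAntiOn_cos _ _ hx2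
      · exact ⟨hx1.le, by linarith [ht₀_mem.2, Real.pi_pos]⟩
      · exact ⟨ht₀_mem.1, by linarith [ht₀_mem.2, Real.pi_pos]⟩
    have hprod : 0 ≤ a * (Real.cos x - c) * (Real.cos x + c + 1) :=
      mul_nonneg (mul_nonneg ha.le (by linarith)) (by nlinarith)
    have hquad : 0 ≤ a * (Real.cos x) ^ 2 + a * Real.cos x - π := by nlinarith [hroot, hprod]
    have h1 : 0 ≤ 1 - Real.cos x := by linarith
    exact mul_nonneg (mul_nonneg hcx_pos.le h1) hquad
  -- antitone on [t₀, π/2]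
  have hanti : AntitoneOn Gfun (Set.Icc t₀ (π / 2)) := by
    apply antitoneOn_of_deriv_nonpos (convex_Icc _ _) (hcont _) (hdiff _)
    intro x hx
    rw [interior_Icc] at hx
    rw [(Gfun_hasDerivAt x).deriv]
    have hx1 : t₀ < x := hx.1
    have hx2 : x < π / 2 := hx.2
    have hx0 : 0 < x := lt_of_le_of_lt ht₀_mem.1 hx1
    have hcx_pos : 0 < Real.cos x := by
      apply Real.cos_pos_of_mem_Ioo
      constructor <;> [linarith [Real.pi_pos]; exact hx2]
    have hcx_le1 : Real.cos x ≤ 1 := Real.cos_le_one x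
    have hcx_le : Real.cos x < c := by
      rw [← hcos_t₀]
      apply Real.strictAntiOn_cos _ _ hx1
      · exact ⟨ht₀_mem.1, by linarith [ht₀_mem.2, Real.pi_pos]⟩
      · exact ⟨hx0.le, by linarith [Real.pi_pos]⟩
    have hprod : 0 ≤ a * (c - Real.cos x) * (c + Real.cos x + 1) :=
      mul_nonneg (mul_nonneg ha.le (by linarith)) (by nlinarith)
    have hquad : a * (Real.cos x) ^ 2 + a * Real.cos x - π ≤ 0 := by nlinarith [hroot, hprod]
    have h1 : 0 ≤ 1 - Real.cos x := by linarith
    exact mul_nonpos_of_nonneg_of_nonpos (mul_nonneg hcx_pos.le h1) hquad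
  have hG0 : Gfun 0 = 0 := by simp [Gfun]
  have hGhalf : Gfun (π / 2) = 0 := by
    simp [Gfun, Real.sin_pi_div_two, Real.cos_pi_div_two]
    ring
  intro t ht
  rcases le_total t t₀ with h | h
  · have := hmono (Set.mem_Icc.mpr ⟨le_refl 0, ht₀_mem.1⟩) (Set.mem_Icc.mpr ⟨ht.1, h⟩) ht.1
    rwa [hG0] at this
  · have := hanti (Set.mem_Icc.mpr ⟨h, ht.2⟩) (Set.mem_Icc.mpr ⟨ht₀_mem.2, le_refl _⟩) ht.2
    rwa [hGhalf] at this

set_option maxHeartbeats 1000000 in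
theorem P_upper_bound (σ : ℝ) (hσ : σ ∈ Set.Ioo (0:ℝ) 1) :
    (1 / Real.sqrt (1 - σ ^ 2) ^ 3) *
        (1 - (2 / π) * (Real.sqrt (1 - σ ^ 2) +
          (1 / σ) * Real.arctan (σ / Real.sqrt (1 - σ ^ 2)))) ≤ 1 - 4 / π ∧
    1 - 4 / π ≤ -0.27 := by
  obtain ⟨hσ0, hσ1⟩ := hσ
  have hπ := Real.pi_pos
  constructor
  · have h1σ : 0 < 1 - σ ^ 2 := by nlinarith
    have hτ : 0 < Real.sqrt (1 - σ ^ 2) := Real.sqrt_pos.mpr h1σ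
    set τ := Real.sqrt (1 - σ ^ 2) with hτdef
    set t := Real.arcsin σ with htdef
    have ht1 : 0 < t := Real.arcsin_pos.mpr hσ0
    have ht2 : t < π / 2 := Real.arcsin_lt_pi_div_two.mpr hσ1
    have hsin : Real.sin t = σ := Real.sin_arcsin (by linarith) hσ1.le
    have hcos : Real.cos t = τ := Real.cos_arcsin σ
    have harctan : Real.arctan (σ / τ) = t := by
      rw [hτdef, ← Real.tan_arcsin, ← htdef, Real.arctan_tan (by linarith) ht2]
    have hG := Gfun_nonneg t ⟨ht1.le, ht2.le⟩
    unfold Gfun at hG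
    rw [hsin, hcos] at hG
    rw [harctan]
    have hτ3 : 0 < τ ^ 3 := by positivity
    rw [one_div, inv_mul_le_iff₀ hτ3]
    rw [← mul_le_mul_iff_left₀ (show (0:ℝ) < π * σ by positivity)]
    have e1 : (1 - 2 / π * (τ + 1 / σ * t)) * (π * σ) = π * σ - 2 * σ * τ - 2 * t := by
      field_simp
      ring
    have e2 : τ ^ 3 * (1 - 4 / π) * (π * σ) = π * σ * τ ^ 3 - 4 * σ * τ ^ 3 := by
      field_simp
    rw [e1, e2]
    nlinarith [hG]
  · have h : 1.27 * π < 4 := by nlinarith [Real.pi_lt_d6]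
    rw [show (-0.27:ℝ) = 1 - 1.27 by norm_num, sub_le_sub_iff_left, le_div_iff₀ hπ]
    linarith
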